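/- Let x, s ∈ ℝⁿ with x, s > 0, ‖x‖, ‖s‖ ≤ ω, μ > 0, and suppose XS = μI + θμL for a diagonal matrix L with -I ⪯ L ⪯ I and θ ∈ [0, 1/4]. Then the symmetric matrix U = [[X², -θμL],[-θμL, S²]] is positive definite, with smallest eigenvalue at least μ²/(4ω²) and largest eigenvalue at most 2ω²; consequently κ(U) ≤ 8ω⁴/μ². -/

import Mathlib

open Matrix Finset

set_option maxHeartbeats 1000000 in
lemma scalar_key (x s l μ θ ω a b : ℝ) (hx : 0 < x) (hs : 0 < s) (hμ : 0 < μ) (hω : 0 < ω)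
    (hx2 : x ^ 2 ≤ ω ^ 2) (hs2 : s ^ 2 ≤ ω ^ 2) (hl : |l| ≤ 1)
    (hxs : x * s = μ * (1 + θ * l)) (hθ0 : 0 ≤ θ) (hθ1 : θ ≤ 1 / 4) :
    μ ^ 2 / (4 * ω ^ 2) * (a ^ 2 + b ^ 2) ≤
      x ^ 2 * a ^ 2 + s ^ 2 * b ^ 2 - 2 * (θ * μ) * l * a * b ∧
    x ^ 2 * a ^ 2 + s ^ 2 * b ^ 2 - 2 * (θ * μ) * l * a * b ≤
      2 * ω ^ 2 * (a ^ 2 + b ^ 2) := by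
  obtain ⟨hl1, hl2⟩ := abs_le.mp hl
  have hθl : -(1/4 : ℝ) ≤ θ * l := by nlinarith
  have hθlu : θ * l ≤ 1 / 4 := by nlinarith
  have hxs34 : 3 / 4 * μ ≤ x * s := by nlinarith
  have hxs2 : 9 / 16 * μ ^ 2 ≤ x ^ 2 * s ^ 2 := by
    nlinarith [sq_nonneg (x * s - 3/4 * μ), mul_le_mul_of_nonneg_left hxs34 hμ.le]
  have hθl2 : θ ^ 2 * l ^ 2 ≤ 1 / 16 := by
    nlinarith [mul_nonneg (by linarith : (0:ℝ) ≤ θ * l + 1/4) (by linarith : (0:ℝ) ≤ 1/4 - θ * l)]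
  have hμω : μ ≤ 4 / 3 * ω ^ 2 := by nlinarith [mul_pos hx hs]
  constructor
  · rw [div_mul_eq_mul_div, div_le_iff₀ (by positivity)]
    have hP : 0 < 4 * ω ^ 2 * x ^ 2 - μ ^ 2 := by
      nlinarith [hxs2, mul_le_mul_of_nonneg_left hs2 (sq_nonneg x)]
    have hPQ : (4 * ω ^ 2 * (θ * μ * l)) ^ 2 ≤
        (4 * ω ^ 2 * x ^ 2 - μ ^ 2) * (4 * ω ^ 2 * s ^ 2 - μ ^ 2) := by
      nlinarith [mul_le_mul_of_nonneg_left hxs2 (show (0:ℝ) ≤ 16 * ω ^ 4 by positivity),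
        mul_le_mul_of_nonneg_left hθl2 (show (0:ℝ) ≤ 16 * ω ^ 4 * μ ^ 2 by positivity),
        mul_le_mul_of_nonneg_left hx2 (show (0:ℝ) ≤ 4 * ω ^ 2 * μ ^ 2 by positivity),
        mul_le_mul_of_nonneg_left hs2 (show (0:ℝ) ≤ 4 * ω ^ 2 * μ ^ 2 by positivity),
        sq_nonneg μ, sq_nonneg (μ^2)]
    have hprod : 0 ≤ (4 * ω ^ 2 * x ^ 2 - μ ^ 2) *
        ((x ^ 2 * a ^ 2 + s ^ 2 * b ^ 2 - 2 * (θ * μ) * l * a * b) * (4 * ω ^ 2)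
          - μ ^ 2 * (a ^ 2 + b ^ 2)) := by
      nlinarith [sq_nonneg ((4 * ω ^ 2 * x ^ 2 - μ ^ 2) * a - 4 * ω ^ 2 * (θ * μ * l) * b),
        mul_nonneg (sub_nonneg.mpr hPQ) (sq_nonneg b)]
    nlinarith [hprod, hP]
  · have hθμω : θ * μ ≤ ω ^ 2 / 3 := by nlinarith
    nlinarith [mul_nonneg (mul_nonneg (mul_nonneg hθ0 hμ.le) (by linarith : (0:ℝ) ≤ 1 - l)) (sq_nonneg (a - b)),
      mul_nonneg (mul_nonneg (mul_nonneg hθ0 hμ.le) (by linarith : (0:ℝ) ≤ 1 + l)) (sq_nonneg (a + b)),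
      mul_le_mul_of_nonneg_right hx2 (sq_nonneg a),
      mul_le_mul_of_nonneg_right hs2 (sq_nonneg b),
      mul_le_mul_of_nonneg_right hθμω (by positivity : (0:ℝ) ≤ a ^ 2 + b ^ 2)]

lemma quadform_eq (n : ℕ) (x s ℓ : Fin n → ℝ) (c : ℝ) (v : Fin n ⊕ Fin n → ℝ) :
    v ⬝ᵥ (Matrix.fromBlocks
      (Matrix.diagonal fun i => (x i) ^ 2) (-(c • Matrix.diagonal ℓ))
      (-(c • Matrix.diagonal ℓ)) (Matrix.diagonal fun i => (s i) ^ 2)).mulVec v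
    = ∑ i, ((x i)^2 * (v (Sum.inl i))^2 + (s i)^2 * (v (Sum.inr i))^2
        - 2 * c * ℓ i * (v (Sum.inl i)) * (v (Sum.inr i))) := by
  simp only [dotProduct, Matrix.mulVec, Fintype.sum_sum_type,
    Matrix.fromBlocks_apply₁₁, Matrix.fromBlocks_apply₁₂,
    Matrix.fromBlocks_apply₂₁, Matrix.fromBlocks_apply₂₂,
    Matrix.neg_apply, Matrix.smul_apply, Matrix.diagonal_apply, smul_eq_mul,
    mul_ite, mul_zero, apply_ite (f := Neg.neg), neg_zero, ite_mul, zero_mul, neg_mul,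
    Finset.sum_add_distrib, Finset.sum_neg_distrib, Finset.sum_ite_eq, Finset.mem_univ, if_true]
  rw [← Finset.sum_add_distrib]
  exact Finset.sum_congr rfl fun i _ => by ring

lemma dot_self_eq (n : ℕ) (v : Fin n ⊕ Fin n → ℝ) :
    v ⬝ᵥ v = ∑ i : Fin n, ((v (Sum.inl i))^2 + (v (Sum.inr i))^2) := by
  simp only [dotProduct, Fintype.sum_sum_type, ← Finset.sum_add_distrib, sq]

/-- the block matrix `U = [[X², -θμL],[-θμL, S²]]` is positive
definite with smallest eigenvalue at least `μ²/(4ω²)` and largest at most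
`2ω²`; consequently `κ(U) ≤ 8ω⁴/μ²`. -/
theorem stmt_8 (n : ℕ) (hn : 0 < n)
    (x s ℓ : Fin n → ℝ) (μ θ ω : ℝ)
    (hx : ∀ i, 0 < x i) (hs : ∀ i, 0 < s i)
    (hμ : 0 < μ) (hω : 0 < ω)
    (hxnorm : Real.sqrt (∑ i, (x i) ^ 2) ≤ ω)
    (hsnorm : Real.sqrt (∑ i, (s i) ^ 2) ≤ ω)
    (hℓ : ∀ i, |ℓ i| ≤ 1)
    (hxs : ∀ i, x i * s i = μ * (1 + θ * ℓ i))
    (hθ : θ ∈ Set.Icc (0 : ℝ) (1 / 4))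
    (U : Matrix (Fin n ⊕ Fin n) (Fin n ⊕ Fin n) ℝ)
    (hU : U = Matrix.fromBlocks
      (Matrix.diagonal fun i => (x i) ^ 2) (-((θ * μ) • Matrix.diagonal ℓ))
      (-((θ * μ) • Matrix.diagonal ℓ)) (Matrix.diagonal fun i => (s i) ^ 2))
    (hUH : U.IsHermitian) :
    U.PosDef ∧
      (∀ v : Fin n ⊕ Fin n → ℝ,
        μ ^ 2 / (4 * ω ^ 2) * (v ⬝ᵥ v) ≤ v ⬝ᵥ U.mulVec v ∧
          v ⬝ᵥ U.mulVec v ≤ 2 * ω ^ 2 * (v ⬝ᵥ v)) ∧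
      (⨆ i, hUH.eigenvalues i) / (⨅ i, hUH.eigenvalues i) ≤ 8 * ω ^ 4 / μ ^ 2 := by
  obtain ⟨hθ0, hθ1⟩ := hθ
  have ht : 0 < μ ^ 2 / (4 * ω ^ 2) := by positivity
  -- entrywise bounds from the norm bounds
  have hsum : ∀ (y : Fin n → ℝ), Real.sqrt (∑ i, (y i) ^ 2) ≤ ω → ∀ i, y i ^ 2 ≤ ω ^ 2 := by
    intro y hy i
    have hS : 0 ≤ ∑ i, (y i) ^ 2 := by positivity
    have hsq : ∑ i, (y i) ^ 2 ≤ ω ^ 2 := by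
      nlinarith [Real.sq_sqrt hS, Real.sqrt_nonneg (∑ i, (y i) ^ 2)]
    exact le_trans (Finset.single_le_sum (f := fun i => (y i) ^ 2)
      (fun j _ => sq_nonneg _) (Finset.mem_univ i)) hsq
  have hx2 := hsum x hxnorm
  have hs2 := hsum s hsnorm
  -- the key quadratic-form bounds
  have key : ∀ v : Fin n ⊕ Fin n → ℝ,
      μ ^ 2 / (4 * ω ^ 2) * (v ⬝ᵥ v) ≤ v ⬝ᵥ U.mulVec v ∧
        v ⬝ᵥ U.mulVec v ≤ 2 * ω ^ 2 * (v ⬝ᵥ v) := by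
    intro v
    rw [hU, quadform_eq, dot_self_eq]
    constructor
    · rw [Finset.mul_sum]
      exact Finset.sum_le_sum fun i _ =>
        (scalar_key (x i) (s i) (ℓ i) μ θ ω (v (Sum.inl i)) (v (Sum.inr i))
          (hx i) (hs i) hμ hω (hx2 i) (hs2 i) (hℓ i) (hxs i) hθ0 hθ1).1
    · rw [Finset.mul_sum]
      exact Finset.sum_le_sum fun i _ =>
        (scalar_key (x i) (s i) (ℓ i) μ θ ω (v (Sum.inl i)) (v (Sum.inr i))
          (hx i) (hs i) hμ hω (hx2 i) (hs2 i) (hℓ i) (hxs i) hθ0 hθ1).2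
  have hne : Nonempty (Fin n ⊕ Fin n) := ⟨Sum.inl ⟨0, hn⟩⟩
  refine ⟨Matrix.PosDef.of_dotProduct_mulVec_pos hUH ?_, key, ?_⟩
  · intro v hv
    have hstar : star v = v := funext fun i => star_trivial _
    rw [hstar]
    have hvv : 0 < v ⬝ᵥ v := by
      have hnn : 0 ≤ v ⬝ᵥ v := by rw [dot_self_eq]; positivity
      rcases hnn.lt_or_eq with h | h
      · exact h
      · exact absurd (dotProduct_self_eq_zero.mp h.symm) hv
    exact lt_of_lt_of_le (mul_pos ht hvv) (key v).1
  · have heig : ∀ i, μ ^ 2 / (4 * ω ^ 2) ≤ hUH.eigenvalues i ∧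
        hUH.eigenvalues i ≤ 2 * ω ^ 2 := by
      intro i
      set w : Fin n ⊕ Fin n → ℝ := ⇑(hUH.eigenvectorBasis i) with hw
      have hv1 : w ⬝ᵥ w = 1 := by
        have h := hUH.eigenvectorBasis.orthonormal.1 i
        have h2 : (inner (𝕜 := ℝ) (hUH.eigenvectorBasis i) (hUH.eigenvectorBasis i) : ℝ) = 1 := by
          rw [real_inner_self_eq_norm_sq, h]; norm_num
        rw [EuclideanSpace.inner_eq_star_dotProduct] at h2
        simpa [dotProduct] using h2
      have heq : hUH.eigenvalues i = w ⬝ᵥ U.mulVec w := by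
        simpa using hUH.eigenvalues_eq i
      obtain ⟨h1, h2⟩ := key w
      rw [hv1, mul_one] at h1 h2
      exact ⟨heq ▸ h1, heq ▸ h2⟩
    have hsup : (⨆ i, hUH.eigenvalues i) ≤ 2 * ω ^ 2 := ciSup_le fun i => (heig i).2
    have hinf : μ ^ 2 / (4 * ω ^ 2) ≤ ⨅ i, hUH.eigenvalues i := le_ciInf fun i => (heig i).1
    calc (⨆ i, hUH.eigenvalues i) / (⨅ i, hUH.eigenvalues i)
        ≤ (2 * ω ^ 2) / (μ ^ 2 / (4 * ω ^ 2)) :=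
          div_le_div₀ (by positivity) hsup ht hinf
      _ = 8 * ω ^ 4 / μ ^ 2 := by
          field_simp
          ring
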